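/- For j ≥ 3, the submonoid of ℤ₊² generated by (2,0), (1,j), (0,2) is not seminormal. -/

import Mathlib

/-- For `j ≥ 3`, the submonoid of `ℤ₊²` generated by `(2,0)`, `(1,j)`, `(0,2)` is
not seminormal. -/
theorem stmt2 (j : ℕ) (hj : 3 ≤ j) (M : AddSubmonoid (ℤ × ℤ))
    (hM : M = AddSubmonoid.closure {((2 : ℤ), 0), (1, (j : ℤ)), (0, 2)}) :
    ¬ (∀ z : ℤ × ℤ, z ∈ AddSubgroup.closure (M : Set (ℤ × ℤ)) →
      2 • z ∈ M → 3 • z ∈ M → z ∈ M) := by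
  intro h
  have hg1 : ((2 : ℤ), (0 : ℤ)) ∈ M := by
    rw [hM]; exact AddSubmonoid.subset_closure (by simp)
  have hg2 : ((1 : ℤ), (j : ℤ)) ∈ M := by
    rw [hM]; exact AddSubmonoid.subset_closure (by simp)
  have hg3 : ((0 : ℤ), (2 : ℤ)) ∈ M := by
    rw [hM]; exact AddSubmonoid.subset_closure (by simp)
  set z : ℤ × ℤ := (1, (j : ℤ) - 2) with hzdef
  have hzK : z ∈ AddSubgroup.closure (M : Set (ℤ × ℤ)) := by
    have := sub_mem (AddSubgroup.subset_closure hg2) (AddSubgroup.subset_closure hg3)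
    have heq : ((1 : ℤ), (j : ℤ)) - ((0 : ℤ), (2 : ℤ)) = z := by
      simp [hzdef, Prod.ext_iff]
    rwa [heq] at this
  have h2z : 2 • z ∈ M := by
    have hm : ((2 : ℤ), (0 : ℤ)) + (j - 2) • ((0 : ℤ), (2 : ℤ)) ∈ M :=
      add_mem hg1 (nsmul_mem hg3 (j - 2))
    have heq : ((2 : ℤ), (0 : ℤ)) + (j - 2) • ((0 : ℤ), (2 : ℤ)) = 2 • z := by
      simp only [hzdef, Prod.smul_mk, Prod.mk_add_mk, Prod.ext_iff, smul_eq_mul]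
      constructor
      · norm_num
      · push_cast [nsmul_eq_mul]; omega
    rwa [heq] at hm
  have h3z : 3 • z ∈ M := by
    have hm : ((2 : ℤ), (0 : ℤ)) + ((1 : ℤ), (j : ℤ)) + (j - 3) • ((0 : ℤ), (2 : ℤ)) ∈ M :=
      add_mem (add_mem hg1 hg2) (nsmul_mem hg3 (j - 3))
    have heq : ((2 : ℤ), (0 : ℤ)) + ((1 : ℤ), (j : ℤ)) + (j - 3) • ((0 : ℤ), (2 : ℤ)) = 3 • z := by
      simp only [hzdef, Prod.smul_mk, Prod.mk_add_mk, Prod.ext_iff, smul_eq_mul]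
      constructor
      · norm_num
      · push_cast [nsmul_eq_mul]; omega
    rwa [heq] at hm
  have hzM : z ∈ M := h z hzK h2z h3z
  -- derive contradiction: every element of M with odd first coordinate has second coord ≥ j
  rw [hM] at hzM
  have key : ∀ w : ℤ × ℤ,
      w ∈ AddSubmonoid.closure ({((2 : ℤ), 0), (1, (j : ℤ)), (0, 2)} : Set (ℤ × ℤ)) →
      (w.1 % 2 = 1 → (j : ℤ) ≤ w.2) := by
    intro w hw
    induction hw using AddSubmonoid.closure_induction with
    | mem x hx =>
      rcases hx with rfl | rfl | rfl <;> simp <;> omega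
    | zero => simp
    | add x y hx hy ihx ihy =>
      simp only [Prod.fst_add, Prod.snd_add]
      have hx2 : (0 : ℤ) ≤ x.2 ∧ (0 : ℤ) ≤ y.2 := by
        constructor
        all_goals {
          first
          | (clear ihx ihy hy
             induction hx using AddSubmonoid.closure_induction with
             | mem a ha => rcases ha with rfl | rfl | rfl <;> simp <;> positivity
             | zero => simp
             | add a b _ _ iha ihb => simp only [Prod.snd_add]; omega)
          | (clear ihx ihy hx
             induction hy using AddSubmonoid.closure_induction with
             | mem a ha => rcases ha with rfl | rfl | rfl <;> simp <;> positivity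
             | zero => simp
             | add a b _ _ iha ihb => simp only [Prod.snd_add]; omega)
        }
      intro hodd
      omega
  have := key z hzM (by simp [hzdef])
  simp only [hzdef] at this
  omega
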